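/- There exists an integer N₀ such that for every integer N ≥ N₀ there exists a real number x with N^{−2.9} ≤ x < π/2 that is (N, N−3)-good. -/
import Mathlib


open Real Finset

/-- I_s = [(π−s)/2, (π+s)/2]. -/
noncomputable def Iset (s : ℝ) : Set ℝ := Set.Icc ((Real.pi - s) / 2) ((Real.pi + s) / 2)

/-- F(x₁,…,x_{2r}) = Σ_{m=1}^{r} cos(a_m)cos(b_m)·∏_{ℓ=1}^{m−1} sin(a_ℓ)sin(b_ℓ),
where a_m = x_{2m−1}, b_m = x_{2m}. -/
noncomputable def Fangle (a b : ℕ → ℝ) (r : ℕ) : ℝ :=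
  ∑ m ∈ Finset.Icc 1 r, Real.cos (a m) * Real.cos (b m) *
    ∏ l ∈ Finset.Icc 1 (m - 1), (Real.sin (a l) * Real.sin (b l))

/-- X(x₁,…,x_{2r}) = ∏_{m=1}^{r} sin(a_m)sin(b_m). -/
noncomputable def Xangle (a b : ℕ → ℝ) (r : ℕ) : ℝ :=
  ∏ m ∈ Finset.Icc 1 r, (Real.sin (a m) * Real.sin (b m))

/-- E(m,s) = m·sin²(s/2) − cos(s/2)^{2m} + sin(s/2). -/
noncomputable def Efun (m : ℕ) (s : ℝ) : ℝ :=
  (m : ℝ) * Real.sin (s / 2) ^ 2 - Real.cos (s / 2) ^ (2 * m) + Real.sin (s / 2)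

/-- G(N,j,x,s) = (N−j−2)·sin²(s/2) − sin(x/2)·cos(s/2)^{2(N−j−2)} + sin(s/2). -/
noncomputable def Gfun (N j : ℕ) (x s : ℝ) : ℝ :=
  ((N - j - 2 : ℕ) : ℝ) * Real.sin (s / 2) ^ 2
    - Real.sin (x / 2) * Real.cos (s / 2) ^ (2 * (N - j - 2)) + Real.sin (s / 2)

/-- The sequence s_N^{(j)}: s_N^{(0)} = inf{s > 0 : E(N−2,s) = 0},
s_N^{(j)} = inf{s > 0 : G(N,j,s_N^{(j−1)},s) = 0}. -/
noncomputable def sSeq (N : ℕ) : ℕ → ℝ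
  | 0 => sInf {s : ℝ | 0 < s ∧ Efun (N - 2) s = 0}
  | j + 1 => sInf {s : ℝ | 0 < s ∧ Gfun N (j + 1) (sSeq N j) s = 0}

/-- s is N-good: for all x₁,…,x_{2(N−2)} ∈ I_s,
I_s ⊆ α_{N−1,N}({x₁}×⋯×{x_{2(N−2)}}×(0,π)). -/
def NGood (N : ℕ) (s : ℝ) : Prop :=
  ∀ a b : ℕ → ℝ, (∀ m ∈ Finset.Icc 1 (N - 2), a m ∈ Iset s ∧ b m ∈ Iset s) →
    ∀ y ∈ Iset s, ∃ φ ∈ Set.Ioo (0 : ℝ) Real.pi,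
      Real.arccos (Fangle a b (N - 2) + Real.cos φ * Xangle a b (N - 2)) = y

/-- s is (N,j)-good: for all x₁,…,x_{2(N−j−2)} ∈ I_s,
I_s ⊆ α_{N−j−1,N−j}({x₁}×⋯×{x_{2(N−j−2)}}×I_{s_N^{(j−1)}}). -/
def NjGood (N j : ℕ) (s : ℝ) : Prop :=
  ∀ a b : ℕ → ℝ, (∀ m ∈ Finset.Icc 1 (N - j - 2), a m ∈ Iset s ∧ b m ∈ Iset s) →
    ∀ y ∈ Iset s, ∃ φ ∈ Iset (sSeq N (j - 1)),
      Real.arccos (Fangle a b (N - j - 2) + Real.cos φ * Xangle a b (N - j - 2)) = y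

lemma sInf_root_bounds (f : ℝ → ℝ) (hf : Continuous f) {δ : ℝ} (hδ : 0 < δ)
    (h0 : f 0 < 0) (hneg : ∀ s, 0 < s → s < δ → f s < 0) (hπ : 0 < f Real.pi) :
    δ ≤ sInf {s : ℝ | 0 < s ∧ f s = 0} ∧ sInf {s : ℝ | 0 < s ∧ f s = 0} ≤ Real.pi := by
  obtain ⟨c, hc, hfc⟩ := intermediate_value_Icc (le_of_lt Real.pi_pos) hf.continuousOn
    (Set.mem_Icc.mpr ⟨le_of_lt h0, le_of_lt hπ⟩)
  have hc0 : 0 < c := by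
    rcases lt_or_eq_of_le hc.1 with h | h
    · exact h
    · exfalso; rw [← h] at hfc; rw [hfc] at h0; exact lt_irrefl 0 h0
  have hmem : c ∈ {s : ℝ | 0 < s ∧ f s = 0} := ⟨hc0, hfc⟩
  have hbdd : BddBelow {s : ℝ | 0 < s ∧ f s = 0} := ⟨0, fun s hs => le_of_lt hs.1⟩
  constructor
  · apply le_csInf ⟨c, hmem⟩
    intro s hs
    by_contra h
    push_neg at h
    exact absurd hs.2 (ne_of_lt (hneg s hs.1 h))
  · exact le_trans (csInf_le hbdd hmem) hc.2

lemma G_neg_aux (m : ℕ) (u v : ℝ) (hu0 : 0 ≤ u) (hu1 : u ≤ 1) (hv1 : v ≤ 1)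
    (h : u + 2*(m:ℝ)*u^2 < v) : (m:ℝ)*u^2 + u < v * (1 - u^2)^m := by
  have hm0 : (0:ℝ) ≤ (m:ℝ) := Nat.cast_nonneg m
  have hmu : 0 ≤ (m:ℝ) * u^2 := mul_nonneg hm0 (sq_nonneg u)
  have hv0 : 0 < v := by nlinarith
  have hber : 1 - (m:ℝ) * u^2 ≤ (1 - u^2)^m := by
    have := one_add_mul_le_pow (a := -(u^2)) (by nlinarith) m
    have e : (1 + -(u^2)) = 1 - u^2 := by ring
    rw [e] at this; linarith
  have h2 : v * (1 - (m:ℝ)*u^2) ≤ v * (1 - u^2)^m :=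
    mul_le_mul_of_nonneg_left hber (le_of_lt hv0)
  nlinarith [mul_nonneg (mul_nonneg hm0 (sq_nonneg u)) (by linarith : (0:ℝ) ≤ 1 - v)]

lemma sin_half_ge {δ s w : ℝ} (hs : δ ≤ s) (hsπ : s ≤ Real.pi) (hδ0 : 0 < δ)
    (hw0 : 0 ≤ w) (hw1 : w ≤ 1) (hδw : δ = 2 * Real.arcsin w) : w ≤ Real.sin (s/2) := by
  have h1 : Real.arcsin w ≤ s/2 := by rw [hδw] at hs; linarith
  have h2 : s/2 ≤ Real.pi/2 := by linarith
  have h3 : Real.sin (Real.arcsin w) = w := Real.sin_arcsin (by linarith) hw1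
  have := Real.strictMonoOn_sin.monotoneOn
    (Set.mem_Icc.mpr ⟨Real.neg_pi_div_two_le_arcsin w, Real.arcsin_le_pi_div_two w⟩)
    (Set.mem_Icc.mpr ⟨by linarith [Real.arcsin_nonneg.mpr hw0], h2⟩) h1
  rw [h3] at this; exact this

lemma sin_half_lt {δ s w : ℝ} (hs0 : 0 < s) (hs : s < δ)
    (hw0 : 0 ≤ w) (hw1 : w ≤ 1) (hδw : δ = 2 * Real.arcsin w) : Real.sin (s/2) < w := by
  have h1 : s/2 < Real.arcsin w := by rw [hδw] at hs; linarith
  have h3 : Real.sin (Real.arcsin w) = w := Real.sin_arcsin (by linarith) hw1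
  have := Real.strictMonoOn_sin
    (Set.mem_Icc.mpr ⟨by linarith [Real.pi_pos], le_of_lt (lt_of_lt_of_le h1 (Real.arcsin_le_pi_div_two w))⟩)
    (Set.mem_Icc.mpr ⟨Real.neg_pi_div_two_le_arcsin w, Real.arcsin_le_pi_div_two w⟩) h1
  rw [h3] at this; exact this

-- u + 2*Nr*u^2 < v  given u < w = 1/(R+2Nr), v ≥ 1/R
lemma step_arith {R Nr u w v : ℝ} (hR : 1 ≤ R) (hNr : 0 ≤ Nr) (hu0 : 0 ≤ u)
    (huw : u < w) (hw : w = 1/(R + 2*Nr)) (hv : 1/R ≤ v) :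
    u + 2*Nr*u^2 < v := by
  have hP : (0:ℝ) < R + 2*Nr := by linarith
  have hR0 : (0:ℝ) < R := by linarith
  have h1 : u + 2*Nr*u^2 < w + 2*Nr*w^2 := by nlinarith [mul_nonneg hNr (mul_nonneg (by linarith : (0:ℝ) ≤ w - u) (by linarith : (0:ℝ) ≤ w + u))]
  have h2 : w + 2*Nr*w^2 = (R + 4*Nr)/(R+2*Nr)^2 := by rw [hw]; field_simp; ring
  have h3 : (R + 4*Nr)/(R+2*Nr)^2 ≤ 1/R := by
    rw [div_le_div_iff₀ (by positivity) hR0]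
    nlinarith [sq_nonneg Nr]
  linarith

set_option maxHeartbeats 1000000 in
lemma sSeq_bounds (N : ℕ) (hN : 100 ≤ N) :
    ∀ j : ℕ, j ≤ N - 4 →
      0 < sSeq N j ∧ sSeq N j ≤ Real.pi ∧
        1 / (2 * Real.sqrt N + 2 * N * j) ≤ Real.sin (sSeq N j / 2) := by
  have hNpos : (0:ℝ) < N := by exact_mod_cast (by omega : 0 < N)
  have hS10 : (10:ℝ) ≤ Real.sqrt N := by
    rw [show (10:ℝ) = Real.sqrt 100 by rw [show (100:ℝ) = 10^2 by norm_num, Real.sqrt_sq (by norm_num)]]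
    exact Real.sqrt_le_sqrt (by exact_mod_cast hN)
  have hS2 : (Real.sqrt N)^2 = N := Real.sq_sqrt (le_of_lt hNpos)
  intro j
  induction j with
  | zero =>
    intro _
    set w : ℝ := 1/(2*Real.sqrt N) with hwdef
    have hw0 : 0 < w := by positivity
    have hw1 : w ≤ 1 := by rw [hwdef, div_le_one (by positivity)]; linarith
    have hδ0 : 0 < 2 * Real.arcsin w := by
      have := Real.arcsin_pos.mpr hw0; linarith
    have hcont : Continuous (fun s => Efun (N-2) s) := by
      unfold Efun; fun_prop
    have hmN : ((N-2:ℕ):ℝ) ≤ (N:ℝ) := by exact_mod_cast Nat.sub_le N 2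
    have key := sInf_root_bounds (fun s => Efun (N-2) s) hcont hδ0
      (by simp [Efun])
      (by
        intro s hs0 hsδ
        set u : ℝ := Real.sin (s/2) with hudef
        have hsπ : s < Real.pi := by
          by_contra hc
          push_neg at hc
          have : Real.arcsin w ≤ Real.pi/2 := Real.arcsin_le_pi_div_two w
          linarith [Real.pi_pos]
        have hu0 : 0 ≤ u := Real.sin_nonneg_of_nonneg_of_le_pi (by linarith) (by linarith)
        have hu1 : u ≤ 1 := Real.sin_le_one _
        have huw : u < w := sin_half_lt hs0 hsδ (le_of_lt hw0) hw1 rfl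
        have harith : u + 2*((N-2:ℕ):ℝ)*u^2 < 1 := by
          have h1 : u + 2*((N-2:ℕ):ℝ)*u^2 ≤ u + 2*(N:ℝ)*u^2 := by nlinarith [sq_nonneg u]
          have huw' : u < 1/(2*Real.sqrt N) := by rw [hwdef] at huw; exact huw
          have hSu : u * (2*Real.sqrt N) < 1 := (lt_div_iff₀ (by positivity)).mp huw'
          have hu20 : u ≤ 1/20 := by
            have hw20 : 1/(2*Real.sqrt N) ≤ 1/20 := by
              rw [div_le_div_iff₀ (by positivity) (by norm_num)]; linarith
            linarith
          have hq : 4*(N:ℝ)*u^2 < 1 := by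
            have hp1 : (0:ℝ) < 1 - u*(2*Real.sqrt N) := by linarith
            have hp2 : (0:ℝ) < 1 + u*(2*Real.sqrt N) := by positivity
            nlinarith [mul_pos hp1 hp2, hS2]
          nlinarith [sq_nonneg u]
        have := G_neg_aux (N-2) u 1 hu0 hu1 le_rfl harith
        show Efun (N-2) s < 0
        unfold Efun
        rw [pow_mul, Real.cos_sq']
        rw [one_mul] at this
        rw [← hudef]
        linarith)
      (by
        have h2m : 2*(N-2) ≠ 0 := by omega
        simp [Efun, Real.sin_pi_div_two, Real.cos_pi_div_two, zero_pow h2m]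
        positivity)
    have hs0 : sSeq N 0 = sInf {s : ℝ | 0 < s ∧ Efun (N - 2) s = 0} := rfl
    rw [hs0]
    refine ⟨lt_of_lt_of_le hδ0 key.1, key.2, ?_⟩
    have := sin_half_ge key.1 key.2 hδ0 (le_of_lt hw0) hw1 rfl
    simpa [hwdef] using this
  | succ j ih =>
    intro hj
    obtain ⟨hp0, hpπ, hpv⟩ := ih (by omega)
    set R : ℝ := 2 * Real.sqrt N + 2 * N * j with hRdef
    have hR1 : (1:ℝ) ≤ R := by
      have : (0:ℝ) ≤ 2*(N:ℝ)*j := by positivity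
      linarith
    set v : ℝ := Real.sin (sSeq N j / 2) with hvdef
    have hv0 : 0 < v := lt_of_lt_of_le (by positivity) hpv
    have hv1 : v ≤ 1 := Real.sin_le_one _
    set w : ℝ := 1/(R + 2*N) with hwdef
    have hw0 : 0 < w := by
      have : (0:ℝ) < R + 2*N := by linarith
      positivity
    have hw1 : w ≤ 1 := by
      rw [hwdef, div_le_one (by linarith)]; linarith
    have hδ0 : 0 < 2 * Real.arcsin w := by
      have := Real.arcsin_pos.mpr hw0; linarith
    set m : ℕ := N - (j+1) - 2 with hmdef
    have hm1 : 1 ≤ m := by omega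
    have hmN : ((m:ℕ):ℝ) ≤ (N:ℝ) := by have : m ≤ N := by omega
                                       exact_mod_cast this
    have hcont : Continuous (fun s => Gfun N (j+1) (sSeq N j) s) := by
      unfold Gfun; fun_prop
    have key := sInf_root_bounds (fun s => Gfun N (j+1) (sSeq N j) s) hcont hδ0
      (by
        show Gfun N (j+1) (sSeq N j) 0 < 0
        unfold Gfun
        simp only [zero_div, Real.sin_zero, Real.cos_zero, one_pow]
        rw [← hmdef, ← hvdef]
        simpa using hv0)
      (by
        intro s hs0 hsδ
        set u : ℝ := Real.sin (s/2) with hudef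
        have hsπ : s < Real.pi := by
          by_contra hc
          push_neg at hc
          have : Real.arcsin w ≤ Real.pi/2 := Real.arcsin_le_pi_div_two w
          linarith [Real.pi_pos]
        have hu0 : 0 ≤ u := Real.sin_nonneg_of_nonneg_of_le_pi (by linarith) (by linarith)
        have hu1 : u ≤ 1 := Real.sin_le_one _
        have huw : u < w := sin_half_lt hs0 hsδ (le_of_lt hw0) hw1 rfl
        have harith0 : u + 2*(N:ℝ)*u^2 < v :=
          step_arith hR1 (by positivity) hu0 huw hwdef hpv
        have harith : u + 2*((m:ℕ):ℝ)*u^2 < v := by nlinarith [sq_nonneg u]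
        have hGlt := G_neg_aux m u v hu0 hu1 hv1 harith
        show Gfun N (j+1) (sSeq N j) s < 0
        unfold Gfun
        rw [pow_mul, Real.cos_sq']
        rw [← hmdef, ← hvdef, ← hudef]
        linarith)
      (by
        show 0 < Gfun N (j+1) (sSeq N j) Real.pi
        have h2m : 2*(N-(j+1)-2) ≠ 0 := by omega
        unfold Gfun
        simp [Real.sin_pi_div_two, Real.cos_pi_div_two, zero_pow h2m]
        positivity)
    have hs1 : sSeq N (j+1) = sInf {s : ℝ | 0 < s ∧ Gfun N (j+1) (sSeq N j) s = 0} := rfl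
    rw [hs1]
    refine ⟨lt_of_lt_of_le hδ0 key.1, key.2, ?_⟩
    have hfin := sin_half_ge key.1 key.2 hδ0 (le_of_lt hw0) hw1 rfl
    have hcast : 2 * Real.sqrt N + 2 * (N:ℝ) * ((j+1:ℕ):ℝ) = R + 2*N := by
      rw [hRdef]; push_cast; ring
    rw [hcast, ← hwdef]
    exact hfin

lemma Iset_cos_le {x θ : ℝ} (hx0 : 0 ≤ x) (hxπ : x ≤ Real.pi) (hθ : θ ∈ Iset x) :
    |Real.cos θ| ≤ Real.sin (x/2) := by
  obtain ⟨h1, h2⟩ := hθ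
  have e1 : Real.cos ((Real.pi - x)/2) = Real.sin (x/2) := by
    rw [show (Real.pi - x)/2 = Real.pi/2 - x/2 by ring, Real.cos_pi_div_two_sub]
  have e2 : Real.cos ((Real.pi + x)/2) = -Real.sin (x/2) := by
    rw [show (Real.pi + x)/2 = Real.pi/2 - (-(x/2)) by ring, Real.cos_pi_div_two_sub,
      Real.sin_neg]
  have hub : Real.cos θ ≤ Real.sin (x/2) := by
    rw [← e1]
    exact Real.cos_le_cos_of_nonneg_of_le_pi (by linarith) (by linarith) h1
  have hlb : -Real.sin (x/2) ≤ Real.cos θ := by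
    rw [← e2]
    exact Real.cos_le_cos_of_nonneg_of_le_pi (by linarith) (by linarith) h2
  exact abs_le.mpr ⟨hlb, hub⟩

lemma Iset_sin_ge {x θ : ℝ} (hx0 : 0 ≤ x) (hxπ : x ≤ Real.pi) (hθ : θ ∈ Iset x) :
    Real.cos (x/2) ≤ Real.sin θ := by
  obtain ⟨h1, h2⟩ := hθ
  have e1 : Real.sin θ = Real.cos (Real.pi/2 - θ) := (Real.cos_pi_div_two_sub θ).symm
  have e2 : Real.cos (Real.pi/2 - θ) = Real.cos |Real.pi/2 - θ| := (Real.cos_abs _).symm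
  rw [e1, e2]
  apply Real.cos_le_cos_of_nonneg_of_le_pi (abs_nonneg _) (by linarith)
  rw [abs_le]
  constructor <;> [linarith; linarith]

lemma cover_ineq {s u F X c : ℝ} (hs0 : 0 ≤ s) (hs1 : s ≤ 1) (hu1 : u ≤ 1) (hu0 : 0 ≤ u)
    (hus : 10*s ≤ u) (hF : |F| ≤ s^2) (hX : 1 - s^2 ≤ X) (hc : |c| ≤ s) :
    F - u*X ≤ c ∧ c ≤ F + u*X := by
  obtain ⟨hF1, hF2⟩ := abs_le.mp hF
  obtain ⟨hc1, hc2⟩ := abs_le.mp hc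
  have hXu : u*(1-s^2) ≤ u*X := mul_le_mul_of_nonneg_left hX hu0
  have h1 : u*s^2 ≤ s^2 := by nlinarith
  have h2 : s^2 ≤ s := by nlinarith
  constructor <;> nlinarith

set_option maxHeartbeats 1000000 in
/-- for N large there is an (N,N−3)-good number x ≥ N^{−2.9}
(and x < π/2). -/
theorem exists_NjGood_ge_rpow :
    ∃ N₀ : ℕ, ∀ N : ℕ, N₀ ≤ N →
      ∃ x : ℝ, (N : ℝ) ^ (-(2.9 : ℝ)) ≤ x ∧ x < Real.pi / 2 ∧ NjGood N (N - 3) x := by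
  refine ⟨100, fun N hN => ?_⟩
  have hNpos : (0:ℝ) < N := by exact_mod_cast (by omega : 0 < N)
  have hS10 : (10:ℝ) ≤ Real.sqrt N := by
    rw [show (10:ℝ) = Real.sqrt 100 by
      rw [show (100:ℝ) = 10^2 by norm_num, Real.sqrt_sq (by norm_num)]]
    exact Real.sqrt_le_sqrt (by exact_mod_cast hN)
  have hN100 : (100:ℝ) ≤ (N:ℝ) := by exact_mod_cast hN
  set x : ℝ := 1/(10*(N:ℝ)^2) with hxdef
  have hx0 : 0 < x := by positivity
  have hxsmall : x ≤ 1/100000 := by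
    rw [hxdef, div_le_div_iff₀ (by positivity) (by norm_num)]
    nlinarith
  refine ⟨x, ?_, ?_, ?_⟩
  · -- N^{-2.9} ≤ x
    have key : 10*(N:ℝ)^2 ≤ (N:ℝ)^(2.9:ℝ) := by
      have h1 : (N:ℝ)^(2.9:ℝ) = (N:ℝ)^(2:ℝ) * (N:ℝ)^(0.9:ℝ) := by
        rw [← Real.rpow_add hNpos]; norm_num
      have h2 : Real.sqrt N ≤ (N:ℝ)^(0.9:ℝ) := by
        rw [Real.sqrt_eq_rpow]
        exact Real.rpow_le_rpow_of_exponent_le (by linarith) (by norm_num)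
      have h3 : (N:ℝ)^(2:ℝ) = (N:ℝ)^2 := by
        rw [show (2:ℝ) = ((2:ℕ):ℝ) by norm_num, Real.rpow_natCast]
      rw [h1, h3]
      nlinarith [sq_nonneg ((N:ℝ))]
    have hneg : (N:ℝ)^(-(2.9:ℝ)) = ((N:ℝ)^(2.9:ℝ))⁻¹ := Real.rpow_neg (le_of_lt hNpos) _
    rw [hneg, hxdef]
    rw [one_div]
    exact inv_anti₀ (by positivity) key
  · -- x < π/2
    have := Real.pi_gt_three
    linarith
  · -- NjGood
    intro a b hab y hy
    have hidx : N - (N-3) - 2 = 1 := by omega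
    have hidx2 : N - 3 - 1 = N - 4 := by omega
    obtain ⟨ht0, htπ, htv⟩ := sSeq_bounds N hN (N-4) le_rfl
    set t : ℝ := sSeq N (N-4) with htdef
    -- lower bound sin(t/2) ≥ 1/(2N²)
    have hu : 1/(2*(N:ℝ)^2) ≤ Real.sin (t/2) := by
      refine le_trans ?_ htv
      have hc : ((N-4:ℕ):ℝ) = (N:ℝ) - 4 := by
        rw [Nat.cast_sub (by omega)]; norm_num
      rw [hc]
      have hden : 2*Real.sqrt N + 2*(N:ℝ)*((N:ℝ)-4) ≤ 2*(N:ℝ)^2 := by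
        have hsle : Real.sqrt N ≤ (N:ℝ) := by
          calc Real.sqrt N ≤ Real.sqrt ((N:ℝ)^2) := Real.sqrt_le_sqrt (by nlinarith)
            _ = (N:ℝ) := Real.sqrt_sq (le_of_lt hNpos)
        nlinarith
      apply one_div_le_one_div_of_le
      · nlinarith
      · exact hden
    set u : ℝ := Real.sin (t/2) with hudef
    have hu1 : u ≤ 1 := Real.sin_le_one _
    have hu0 : 0 < u := lt_of_lt_of_le (by positivity) hu
    -- basic facts about x
    have hxπ : x ≤ Real.pi := by linarith [Real.pi_gt_three]
    set s : ℝ := Real.sin (x/2) with hsdef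
    have hs0 : 0 ≤ s := Real.sin_nonneg_of_nonneg_of_le_pi (by linarith) (by linarith)
    have hsx : s ≤ x/2 := by
      have := Real.sin_le (by linarith : 0 ≤ x/2)
      linarith
    have hs1 : s ≤ 1 := Real.sin_le_one _
    -- key comparison: 10 s ≤ u
    have hus : 10*s ≤ u := by
      have hx2 : x/2 = 1/(20*(N:ℝ)^2) := by rw [hxdef]; field_simp; ring
      have heq : 10*(1/(20*(N:ℝ)^2)) = 1/(2*(N:ℝ)^2) := by field_simp; ring
      have hsx2 : s ≤ 1/(20*(N:ℝ)^2) := by rw [← hx2]; exact hsx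
      linarith
    -- bounds from membership
    have ha1 := hab 1 (Finset.mem_Icc.mpr ⟨le_refl 1, by omega⟩)
    have hca : |Real.cos (a 1)| ≤ s := Iset_cos_le (le_of_lt hx0) hxπ ha1.1
    have hcb : |Real.cos (b 1)| ≤ s := Iset_cos_le (le_of_lt hx0) hxπ ha1.2
    have hsa : Real.cos (x/2) ≤ Real.sin (a 1) := Iset_sin_ge (le_of_lt hx0) hxπ ha1.1
    have hsb : Real.cos (x/2) ≤ Real.sin (b 1) := Iset_sin_ge (le_of_lt hx0) hxπ ha1.2
    have hcy : |Real.cos y| ≤ s := Iset_cos_le (le_of_lt hx0) hxπ hy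
    set F : ℝ := Real.cos (a 1) * Real.cos (b 1) with hFdef
    set X : ℝ := Real.sin (a 1) * Real.sin (b 1) with hXdef
    have hcx0 : 0 ≤ Real.cos (x/2) := by
      apply Real.cos_nonneg_of_mem_Icc
      constructor <;> [linarith [Real.pi_pos]; linarith [Real.pi_gt_three]]
    have hFabs : |F| ≤ s^2 := by
      rw [hFdef, abs_mul]
      calc |Real.cos (a 1)| * |Real.cos (b 1)| ≤ s * s :=
            mul_le_mul hca hcb (abs_nonneg _) hs0
        _ = s^2 := by ring
    have hX1 : X ≤ 1 := by
      rw [hXdef]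
      calc Real.sin (a 1) * Real.sin (b 1) ≤ 1 * 1 :=
            mul_le_mul (Real.sin_le_one _) (Real.sin_le_one _)
              (le_trans hcx0 hsb) (by norm_num)
        _ = 1 := by norm_num
    have hXlb : 1 - s^2 ≤ X := by
      have h1 : Real.cos (x/2)^2 ≤ X := by
        rw [hXdef, sq]
        exact mul_le_mul hsa hsb hcx0 (le_trans hcx0 hsa)
      have h2 : Real.cos (x/2)^2 = 1 - s^2 := by
        rw [Real.cos_sq', hsdef]
      linarith
    obtain ⟨hineq2, hineq1⟩ := cover_ineq hs0 hs1 hu1 (le_of_lt hu0) hus hFabs hXlb hcy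
    -- IVT
    set g : ℝ → ℝ := fun φ => F + Real.cos φ * X with hgdef
    have hgcont : ContinuousOn g (Set.Icc ((Real.pi-t)/2) ((Real.pi+t)/2)) := by
      apply Continuous.continuousOn
      rw [hgdef]
      fun_prop
    have hIVT := intermediate_value_Icc'
      (by linarith : (Real.pi-t)/2 ≤ (Real.pi+t)/2) hgcont
    have hgb : g ((Real.pi + t)/2) = F - u * X := by
      show F + Real.cos ((Real.pi + t)/2) * X = F - u * X
      rw [show (Real.pi + t)/2 = Real.pi/2 - (-(t/2)) by ring, Real.cos_pi_div_two_sub,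
        Real.sin_neg, hudef]
      ring
    have hga : g ((Real.pi - t)/2) = F + u * X := by
      show F + Real.cos ((Real.pi - t)/2) * X = F + u * X
      rw [show (Real.pi - t)/2 = Real.pi/2 - t/2 by ring, Real.cos_pi_div_two_sub, hudef]
    rw [hgb, hga] at hIVT
    obtain ⟨φ, hφmem, hφeq⟩ := hIVT (Set.mem_Icc.mpr ⟨hineq2, hineq1⟩)
    refine ⟨φ, by rw [hidx2]; exact hφmem, ?_⟩
    rw [hidx]
    have hF1 : Fangle a b 1 = F := by
      rw [Fangle, show Finset.Icc 1 1 = {1} from Finset.Icc_self 1, Finset.sum_singleton,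
        show (1:ℕ) - 1 = 0 from rfl,
        show Finset.Icc 1 0 = (∅ : Finset ℕ) from Finset.Icc_eq_empty (by norm_num),
        Finset.prod_empty, mul_one, hFdef]
    have hX1' : Xangle a b 1 = X := by
      rw [Xangle, show Finset.Icc 1 1 = {1} from Finset.Icc_self 1, Finset.prod_singleton,
        hXdef]
    rw [hF1, hX1']
    have hgy : F + Real.cos φ * X = Real.cos y := hφeq
    rw [hgy]
    exact Real.arccos_cos (by obtain ⟨h1, h2⟩ := hy; linarith)
      (by obtain ⟨h1, h2⟩ := hy; linarith)
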